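/- arXiv:2007.08454 — 3 statements merged into one kernel-verified Lean document; each statement's English description precedes it below -/
import Mathlib

section
/- Let R ∈ SO(3) and S(θ) the rotation about the y-axis by angle θ. The function θ ↦ ‖R·S(θ) − I₃‖_F restricted to [0, 2π) is minimized at θ̂ = arctan2(R₁₃ − R₃₁, R₁₁ + R₃₃), provided (R₁₃ − R₃₁, R₁₁ + R₃₃) ≠ (0,0). -/
open Matrix

open Real

/-- Rotation about the y-axis by angle θ. -/
noncomputable def yrot (θ : ℝ) : Matrix (Fin 3) (Fin 3) ℝ :=
  !![cos θ, 0, -sin θ; 0, 1, 0; sin θ, 0, cos θ]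

/-- Frobenius norm of a 3×3 real matrix. -/
noncomputable def frobNorm (A : Matrix (Fin 3) (Fin 3) ℝ) : ℝ :=
  Real.sqrt (∑ i, ∑ j, (A i j) ^ 2)

/-- Two-argument arctangent with values in `(-π, π]`. -/
noncomputable def arctan2 (b a : ℝ) : ℝ := Complex.arg ⟨a, b⟩

lemma key_sum (R : Matrix (Fin 3) (Fin 3) ℝ) (hO : Rᵀ * R = 1) (θ : ℝ) :
    ∑ i, ∑ j, (((R * yrot θ - 1)) i j) ^ 2 =
      6 - 2 * (R 1 1) - 2 * ((R 0 0 + R 2 2) * Real.cos θ + (R 0 2 - R 2 0) * Real.sin θ) := by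
  have e00 := congrFun (congrFun hO 0) 0
  have e11 := congrFun (congrFun hO 1) 1
  have e22 := congrFun (congrFun hO 2) 2
  have e02 := congrFun (congrFun hO 0) 2
  simp only [Matrix.mul_apply, Matrix.transpose_apply, Matrix.one_apply, Fin.sum_univ_three,
    if_true, if_pos rfl] at e00 e11 e22 e02
  norm_num [Fin.ext_iff] at e00 e11 e22 e02
  have hpy := Real.sin_sq_add_cos_sq θ
  simp only [Matrix.sub_apply, Matrix.mul_apply, Matrix.one_apply, yrot, Fin.sum_univ_three,
    Matrix.cons_val', Matrix.cons_val_zero, Matrix.cons_val_one, Matrix.head_cons,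
    Matrix.empty_val', Matrix.cons_val_fin_one, Matrix.head_fin_const, Matrix.cons_val_two,
    Matrix.tail_cons]
  norm_num [Fin.ext_iff]
  simp [Fin.ext_iff, Matrix.vecHead, Matrix.vecTail]
  linear_combination (Real.cos θ ^ 2 + Real.sin θ ^ 2) * e00 + e11 +
    (Real.cos θ ^ 2 + Real.sin θ ^ 2) * e22 + 2 * hpy

theorem yrot_minimizer (R : Matrix (Fin 3) (Fin 3) ℝ)
    (hR : Rᵀ * R = 1 ∧ R.det = 1)
    (hab : ¬(R 0 2 - R 2 0 = 0 ∧ R 0 0 + R 2 2 = 0)) :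
    ∀ θ ∈ Set.Ico (0 : ℝ) (2 * π),
      frobNorm (R * yrot (arctan2 (R 0 2 - R 2 0) (R 0 0 + R 2 2)) - 1) ≤
        frobNorm (R * yrot θ - 1) := by
  intro θ hθ
  set a := R 0 0 + R 2 2 with ha
  set b := R 0 2 - R 2 0 with hb
  set z : ℂ := ⟨a, b⟩ with hz
  have hz0 : z ≠ 0 := by
    intro h
    apply hab
    have h1 : z.re = 0 := by rw [h]; rfl
    have h2 : z.im = 0 := by rw [h]; rfl
    exact ⟨h2, h1⟩
  set r : ℝ := Real.sqrt (a ^ 2 + b ^ 2) with hr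
  have habs : ‖z‖ = r := by
    rw [Complex.norm_def, Complex.normSq_apply, hr]
    norm_num [sq]
    rfl
  have hr0 : 0 < r := by
    rw [← habs]; exact norm_pos_iff.mpr hz0
  have hcos : Real.cos (arctan2 b a) = a / r := by
    unfold arctan2
    rw [Complex.cos_arg hz0, habs]
  have hsin : Real.sin (arctan2 b a) = b / r := by
    unfold arctan2
    rw [Complex.sin_arg, habs]
  have hr2 : r ^ 2 = a ^ 2 + b ^ 2 := Real.sq_sqrt (by positivity)
  -- scalar inequality
  have hmax : a * Real.cos θ + b * Real.sin θ ≤ a * Real.cos (arctan2 b a) + b * Real.sin (arctan2 b a) := by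
    rw [hcos, hsin]
    have h1 : a * (a / r) + b * (b / r) = r := by
      field_simp
      linarith [hr2]
    rw [h1]
    nlinarith [sq_nonneg (a * Real.sin θ - b * Real.cos θ), Real.sin_sq_add_cos_sq θ,
      sq_nonneg (r - (a * Real.cos θ + b * Real.sin θ))]
  have k1 := key_sum R hR.1 (arctan2 b a)
  have k2 := key_sum R hR.1 θ
  unfold frobNorm
  apply Real.sqrt_le_sqrt
  rw [← ha, ← hb] at k1 k2
  rw [k1, k2]
  linarith
end

section
/- For R ∈ SO(3) with θ̂ = arctan2(R₁₃ − R₃₁, R₁₁ + R₃₃) and (R₁₃ − R₃₁, R₁₁ + R₃₃) ≠ (0,0), the minimal value of ‖R·S(θ) − I₃‖_F² over θ equals 6 − 2R₂₂ − 2√((R₁₁ + R₃₃)² + (R₁₃ − R₃₁)²). -/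
open Matrix

open Real

/-- Squared Frobenius norm of a 3×3 real matrix. -/
noncomputable def frobSq (A : Matrix (Fin 3) (Fin 3) ℝ) : ℝ :=
  ∑ i, ∑ j, (A i j) ^ 2

lemma frob_eq (R : Matrix (Fin 3) (Fin 3) ℝ) (h : Rᵀ * R = 1) (θ : ℝ) :
    frobSq (R * yrot θ - 1) =
      6 - 2 * R 1 1 - 2 * ((R 0 0 + R 2 2) * cos θ + (R 0 2 - R 2 0) * sin θ) := by
  have h0 := congrFun (congrFun h 0) 0
  have h1 := congrFun (congrFun h 1) 1
  have h2 := congrFun (congrFun h 2) 2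
  simp [Matrix.mul_apply, Fin.sum_univ_three, Matrix.one_apply, transpose_apply] at h0 h1 h2
  have hcs := sin_sq_add_cos_sq θ
  simp only [frobSq, yrot, Fin.sum_univ_three, Matrix.sub_apply, Matrix.mul_apply,
    Matrix.one_apply, Fin.sum_univ_three]
  norm_num [show ¬((0:Fin 3) = 2) from by decide, show ¬((1:Fin 3) = 2) from by decide,
    show ¬((2:Fin 3) = 0) from by decide, show ¬((2:Fin 3) = 1) from by decide, Matrix.cons_val_two, Matrix.cons_val_one, Matrix.cons_val_zero, Matrix.head_cons, Matrix.tail_cons]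
  linear_combination (R 0 0 * R 0 0 + R 0 2 * R 0 2 + R 1 0 * R 1 0 + R 1 2 * R 1 2 +
    R 2 0 * R 2 0 + R 2 2 * R 2 2) * hcs + h0 + h1 + h2

theorem min_value_frobSq (R : Matrix (Fin 3) (Fin 3) ℝ)
    (hR : Rᵀ * R = 1 ∧ R.det = 1)
    (hab : ¬(R 0 2 - R 2 0 = 0 ∧ R 0 0 + R 2 2 = 0)) :
    (∀ θ : ℝ,
      6 - 2 * R 1 1 - 2 * Real.sqrt ((R 0 0 + R 2 2) ^ 2 + (R 0 2 - R 2 0) ^ 2) ≤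
        frobSq (R * yrot θ - 1)) ∧
    frobSq (R * yrot (arctan2 (R 0 2 - R 2 0) (R 0 0 + R 2 2)) - 1) =
      6 - 2 * R 1 1 - 2 * Real.sqrt ((R 0 0 + R 2 2) ^ 2 + (R 0 2 - R 2 0) ^ 2) := by
  have key := frob_eq R hR.1
  set a := R 0 0 + R 2 2 with ha
  set b := R 0 2 - R 2 0 with hb
  have hq : Real.sqrt (a ^ 2 + b ^ 2) ^ 2 = a ^ 2 + b ^ 2 := Real.sq_sqrt (by positivity)
  constructor
  · intro θ
    rw [key θ]
    nlinarith [Real.sqrt_nonneg (a ^ 2 + b ^ 2), sq_nonneg (a * sin θ - b * cos θ),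
      sin_sq_add_cos_sq θ, hq,
      sq_nonneg (Real.sqrt (a ^ 2 + b ^ 2) - (a * cos θ + b * sin θ))]
  · rw [key]
    have hz : (⟨a, b⟩ : ℂ) ≠ 0 := by
      intro h
      apply hab
      have h1 : a = 0 := congrArg Complex.re h
      have h2 : b = 0 := congrArg Complex.im h
      exact ⟨h2, h1⟩
    have habs : ‖(⟨a, b⟩ : ℂ)‖ = Real.sqrt (a ^ 2 + b ^ 2) := by
      rw [Complex.norm_def, Complex.normSq_mk]; congr 1; ring
    have hc : cos (arctan2 b a) = a / Real.sqrt (a ^ 2 + b ^ 2) := by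
      rw [arctan2, Complex.cos_arg hz, habs]
    have hs : sin (arctan2 b a) = b / Real.sqrt (a ^ 2 + b ^ 2) := by
      rw [arctan2, Complex.sin_arg, habs]
    have hqpos : 0 < Real.sqrt (a ^ 2 + b ^ 2) := by
      have : a ≠ 0 ∨ b ≠ 0 := by tauto
      rcases this with h | h <;> [skip; skip] <;> positivity
    rw [hc, hs]
    field_simp
    nlinarith [hq]
end

section
/- For any R ∈ SO(3), the quantity √((R₁₁ + R₃₃)² + (R₁₃ − R₃₁)²) is at most 2, with equality if and only if R is a rotation about the y-axis. -/
open Matrix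

open Real

set_option maxHeartbeats 1000000 in
theorem sqrt_bound_and_yrot_characterization (R : Matrix (Fin 3) (Fin 3) ℝ)
    (hR : Rᵀ * R = 1 ∧ R.det = 1) :
    Real.sqrt ((R 0 0 + R 2 2) ^ 2 + (R 0 2 - R 2 0) ^ 2) ≤ 2 ∧
    (Real.sqrt ((R 0 0 + R 2 2) ^ 2 + (R 0 2 - R 2 0) ^ 2) = 2 ↔
      ∃ θ : ℝ, R = yrot θ) := by
  obtain ⟨hc, hd⟩ := hR
  rw [Matrix.det_fin_three] at hd
  have hr : R * Rᵀ = 1 := mul_eq_one_comm.mp hc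
  have c00 := congrFun (congrFun hc 0) 0
  have c11 := congrFun (congrFun hc 1) 1
  have c22 := congrFun (congrFun hc 2) 2
  have r00 := congrFun (congrFun hr 0) 0
  have r11 := congrFun (congrFun hr 1) 1
  have r22 := congrFun (congrFun hr 2) 2
  have r02 := congrFun (congrFun hr 0) 2
  simp [Matrix.mul_apply, Fin.sum_univ_three, Matrix.one_apply] at c00 c11 c22 r00 r11 r22 r02
  -- row₁ = -(row₀ × row₂): sum of three squares is 0
  have hsq : (R 1 0 + (R 0 1 * R 2 2 - R 0 2 * R 2 1)) ^ 2
      + (R 1 1 + (R 0 2 * R 2 0 - R 0 0 * R 2 2)) ^ 2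
      + (R 1 2 + (R 0 0 * R 2 1 - R 0 1 * R 2 0)) ^ 2 = 0 := by
    linear_combination r11 - 2*hd + (R 2 0^2 + R 2 1^2 + R 2 2^2) * r00 + r22
      - (R 0 0 * R 2 0 + R 0 1 * R 2 1 + R 0 2 * R 2 2) * r02
  have hCsq : (R 1 1 + (R 0 2 * R 2 0 - R 0 0 * R 2 2)) ^ 2 = 0 := by
    have h1 := sq_nonneg (R 1 0 + (R 0 1 * R 2 2 - R 0 2 * R 2 1))
    have h2 := sq_nonneg (R 1 2 + (R 0 0 * R 2 1 - R 0 1 * R 2 0))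
    have h3 := sq_nonneg (R 1 1 + (R 0 2 * R 2 0 - R 0 0 * R 2 2))
    linarith
  have hC : R 1 1 = R 0 0 * R 2 2 - R 0 2 * R 2 0 := by
    have := sq_eq_zero_iff.mp hCsq
    linarith
  -- key identity
  have hid : (R 0 0 + R 2 2) ^ 2 + (R 0 2 - R 2 0) ^ 2
      = 2 + 2 * R 1 1 - R 1 0 ^ 2 - R 1 2 ^ 2 := by
    linear_combination c00 + c22 - 2 * hC
  have h11le : R 1 1 ≤ 1 := by
    nlinarith [c11, sq_nonneg (R 0 1), sq_nonneg (R 2 1), sq_nonneg (R 1 1 - 1)]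
  have he4 : (R 0 0 + R 2 2) ^ 2 + (R 0 2 - R 2 0) ^ 2 ≤ 4 := by
    have := sq_nonneg (R 1 0); have := sq_nonneg (R 1 2); linarith
  have hnn : 0 ≤ (R 0 0 + R 2 2) ^ 2 + (R 0 2 - R 2 0) ^ 2 := by positivity
  constructor
  · calc Real.sqrt ((R 0 0 + R 2 2) ^ 2 + (R 0 2 - R 2 0) ^ 2) ≤ Real.sqrt 4 :=
        Real.sqrt_le_sqrt he4
      _ = 2 := by rw [show (4:ℝ) = 2 ^ 2 by norm_num, Real.sqrt_sq (by norm_num)]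
  · constructor
    · intro hs
      have he : (R 0 0 + R 2 2) ^ 2 + (R 0 2 - R 2 0) ^ 2 = 4 := by
        have := Real.sq_sqrt hnn
        rw [hs] at this; linarith
      have h11 : R 1 1 = 1 := by
        have := sq_nonneg (R 1 0); have := sq_nonneg (R 1 2); linarith
      have h10sq : R 1 0 ^ 2 = 0 := by
        have := sq_nonneg (R 1 0); have := sq_nonneg (R 1 2); linarith
      have h12sq : R 1 2 ^ 2 = 0 := by
        have := sq_nonneg (R 1 0); have := sq_nonneg (R 1 2); linarith
      have h10 : R 1 0 = 0 := sq_eq_zero_iff.mp h10sq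
      have h12 : R 1 2 = 0 := sq_eq_zero_iff.mp h12sq
      have hsum : R 0 1 ^ 2 + R 2 1 ^ 2 = 0 := by
        linear_combination c11 - (R 1 1 + 1) * h11
      have h01 : R 0 1 = 0 := by
        have h : R 0 1 ^ 2 = 0 := by
          have := sq_nonneg (R 0 1); have := sq_nonneg (R 2 1); linarith
        exact sq_eq_zero_iff.mp h
      have h21 : R 2 1 = 0 := by
        have h : R 2 1 ^ 2 = 0 := by
          have := sq_nonneg (R 0 1); have := sq_nonneg (R 2 1); linarith
        exact sq_eq_zero_iff.mp h
      have hcol0 : R 0 0 ^ 2 + R 2 0 ^ 2 = 1 := by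
        linear_combination c00 - R 1 0 * h10
      have hz : (R 2 2 - R 0 0) ^ 2 + (R 0 2 + R 2 0) ^ 2 = 0 := by
        linear_combination c00 + c22 - R 1 0 * h10 - R 1 2 * h12 + 2 * hC - 2 * h11
      have h22' : R 2 2 = R 0 0 := by
        have h := sq_nonneg (R 0 2 + R 2 0)
        have h2 := sq_nonneg (R 2 2 - R 0 0)
        have h3 : (R 2 2 - R 0 0) ^ 2 = 0 := by linarith
        have := sq_eq_zero_iff.mp h3; linarith
      have h02' : R 0 2 = - R 2 0 := by
        have h := sq_nonneg (R 0 2 + R 2 0)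
        have h2 := sq_nonneg (R 2 2 - R 0 0)
        have h3 : (R 0 2 + R 2 0) ^ 2 = 0 := by linarith
        have := sq_eq_zero_iff.mp h3; linarith
      set θ := if 0 ≤ R 2 0 then Real.arccos (R 0 0) else -Real.arccos (R 0 0) with hθ
      have hx1 : -1 ≤ R 0 0 := by
        have := sq_nonneg (R 2 0); have := sq_nonneg (R 0 0 + 1); linarith
      have hx2 : R 0 0 ≤ 1 := by
        have := sq_nonneg (R 2 0); have := sq_nonneg (R 0 0 - 1); linarith
      have hcos : Real.cos θ = R 0 0 := by
        rw [hθ]; split <;> simp [Real.cos_arccos hx1 hx2]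
      have hsin : Real.sin θ = R 2 0 := by
        rw [hθ]
        split <;> rename_i h
        · rw [Real.sin_arccos]
          rw [show 1 - R 0 0 ^ 2 = R 2 0 ^ 2 by linarith, Real.sqrt_sq h]
        · rw [Real.sin_neg, Real.sin_arccos]
          rw [show 1 - R 0 0 ^ 2 = R 2 0 ^ 2 by linarith, Real.sqrt_sq_eq_abs,
            abs_of_neg (lt_of_not_ge h)]
          ring
      refine ⟨θ, ?_⟩
      clear hc hr hd hsq hCsq hC hid h11le he4 hnn hs he hsum h10sq h12sq hcol0 hz c00 c11 c22 r00 r11 r22 r02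
      ext i j
      fin_cases i <;> fin_cases j <;>
        simp [yrot, hcos, hsin, h11, h10, h12, h01, h21, h22', h02']
    · rintro ⟨θ, rfl⟩
      have e00 : yrot θ 0 0 = Real.cos θ := by simp [yrot]
      have e22 : yrot θ 2 2 = Real.cos θ := by simp [yrot]
      have e02 : yrot θ 0 2 = -Real.sin θ := by simp [yrot]
      have e20 : yrot θ 2 0 = Real.sin θ := by simp [yrot]
      rw [e00, e22, e02, e20]
      have h4 : (Real.cos θ + Real.cos θ) ^ 2 + (-Real.sin θ - Real.sin θ) ^ 2 = 4 := by
        nlinarith [Real.sin_sq_add_cos_sq θ]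
      rw [h4, show (4:ℝ) = 2 ^ 2 by norm_num, Real.sqrt_sq (by norm_num)]
end
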